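/- Let a be a nonzero complex number and define f : ℂ → ℂ by f(z) = e^{-z} + a. Then for every z ∈ ℂ, f(z) ∈ {a/3, 2a/3} if and only if f'(z) ∈ {a/3, 2a/3}, and moreover the multiplicity of every such point is 1 for both f - a/3, f - 2a/3, f' - a/3, f' - 2a/3; yet f ≠ f'. -/

import Mathlib

theorem stmt3 (a : ℂ) (ha : a ≠ 0) (f : ℂ → ℂ)
    (hf : ∀ z, f z = Complex.exp (-z) + a) :
    (∀ z, f z ∈ ({a / 3, 2 * a / 3} : Set ℂ) ↔ deriv f z ∈ ({a / 3, 2 * a / 3} : Set ℂ)) ∧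
      (∀ z, f z ∈ ({a / 3, 2 * a / 3} : Set ℂ) → deriv f z ≠ 0) ∧
      (∀ z, deriv f z ∈ ({a / 3, 2 * a / 3} : Set ℂ) → deriv (deriv f) z ≠ 0) ∧
      f ≠ deriv f := by
  have hfe : f = fun z => Complex.exp (-z) + a := funext hf
  have hd : ∀ z : ℂ, HasDerivAt f (-Complex.exp (-z)) z := by
    intro z
    have h1 : HasDerivAt (fun z : ℂ => -z) (-1) z := (hasDerivAt_id z).neg
    have h2 := (Complex.hasDerivAt_exp (-z)).comp z h1
    have h3 := h2.add_const a
    rw [hfe]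
    have h3' : HasDerivAt (fun x : ℂ => Complex.exp (-x) + a) (Complex.exp (-z) * -1) z := h3
    convert h3' using 1
    ring
  have hdf : deriv f = fun z => -Complex.exp (-z) := funext fun z => (hd z).deriv
  have hd2 : ∀ z : ℂ, HasDerivAt (deriv f) (Complex.exp (-z)) z := by
    intro z
    have h1 : HasDerivAt (fun z : ℂ => -z) (-1) z := (hasDerivAt_id z).neg
    have h2 := ((Complex.hasDerivAt_exp (-z)).comp z h1).neg
    rw [hdf]
    have h2' : HasDerivAt (fun x : ℂ => -Complex.exp (-x)) (-(Complex.exp (-z) * -1)) z := h2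
    convert h2' using 1
    ring
  have hdf2 : deriv (deriv f) = fun z => Complex.exp (-z) := funext fun z => (hd2 z).deriv
  refine ⟨?_, ?_, ?_, ?_⟩
  · intro z
    rw [hf z, hdf]
    simp only [Set.mem_insert_iff, Set.mem_singleton_iff]
    constructor
    · rintro (h | h)
      · right; linear_combination -h
      · left; linear_combination -h
    · rintro (h | h)
      · right; linear_combination -h
      · left; linear_combination -h
  · intro z _
    rw [hdf]
    simpa using Complex.exp_ne_zero (-z)
  · intro z _
    rw [hdf2]
    simpa using Complex.exp_ne_zero (-z)
  · intro h
    have h0 := congrFun h 0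
    have h1 := congrFun h 1
    rw [hf, hdf] at h0 h1
    simp only [neg_zero, Complex.exp_zero] at h0
    have ha2 : a = -2 := by linear_combination h0
    have he : Complex.exp (-1) = 1 := by
      rw [ha2] at h1
      have h2 : (2 : ℂ) * Complex.exp (-1) = 2 := by linear_combination h1
      have := mul_left_cancel₀ (two_ne_zero (α := ℂ)) (h2.trans (mul_one 2).symm)
      exact this
    have := congrArg (‖·‖) he
    rw [Complex.norm_exp, norm_one] at this
    simp only [Complex.neg_re, Complex.one_re] at this
    have hlt : Real.exp (-1) < 1 := Real.exp_lt_one_iff.mpr (by norm_num)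
    linarith
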